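/- Suppose $T \in F^k \otimes L \otimes L$ has the same stabilizer in $\mathsf{GL}_k \times \mathsf{GL}_s \times \mathsf{GL}_s$ as $T_{k,n,r}$ (with $r < n$). Then $T$ lies in the orbit $(\mathsf{GL}_k \times \mathsf{GL}_s \times \mathsf{GL}_s) \cdot T_{k,n,r}$; more precisely, $T = a_1 \sum_{j=1}^{r} e_1 \otimes e_{1j} \otimes e_{1j} + a_2 \sum_{i=2}^{k} \sum_{j=1}^{n} e_i \otimes e_{ij} \otimes e_{ij}$ for some nonzero scalars $a_1, a_2$. If instead the stabilizer of $T$ merely contains that of $T_{k,n,r}$, then $T$ has this form with $a_1, a_2$ possibly zero, and hence lies in the orbit closure of $T_{k,n,r}$. -/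

import Mathlib

open Matrix
open scoped BigOperators

/-- The action of a triple of matrices on a tensor in coordinates. -/
def actT {F : Type*} [Field F] {α β γ : Type*} [Fintype α] [Fintype β] [Fintype γ]
    (A : Matrix α α F) (B : Matrix β β F) (C : Matrix γ γ F)
    (T : α → β → γ → F) : α → β → γ → F :=
  fun i j k => ∑ i', ∑ j', ∑ k', A i i' * B j j' * C k k' * T i' j' k'

/-- The first part `∑_{j ≤ r} e₁ ⊗ e_{1j} ⊗ e_{1j}` of `T_{k,n,r}` (with `k = k' + 1`,
`U`-index set `Fin 1 ⊕ Fin k'`, `L`-index set `Fin r ⊕ Fin k' × Fin n`). -/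
def Tpart1 (F : Type*) [Field F] (k' n r : ℕ) :
    (Fin 1 ⊕ Fin k') → (Fin r ⊕ Fin k' × Fin n) → (Fin r ⊕ Fin k' × Fin n) → F
  | Sum.inl _, Sum.inl a, Sum.inl b => if a = b then 1 else 0
  | _, _, _ => 0

/-- The second part `∑_{i=2}^{k} ∑_{j ≤ n} e_i ⊗ e_{ij} ⊗ e_{ij}` of `T_{k,n,r}`. -/
def Tpart2 (F : Type*) [Field F] (k' n r : ℕ) :
    (Fin 1 ⊕ Fin k') → (Fin r ⊕ Fin k' × Fin n) → (Fin r ⊕ Fin k' × Fin n) → F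
  | Sum.inr i, Sum.inr (i', a), Sum.inr (j', b) =>
      if i' = i ∧ j' = i ∧ a = b then 1 else 0
  | _, _, _ => 0

/-- The tensor `T_{k,n,r}`. -/
def Tknr (F : Type*) [Field F] (k' n r : ℕ) :
    (Fin 1 ⊕ Fin k') → (Fin r ⊕ Fin k' × Fin n) → (Fin r ⊕ Fin k' × Fin n) → F :=
  fun i a b => Tpart1 F k' n r i a b + Tpart2 F k' n r i a b

section
variable {F : Type*} [Field F] {α β γ : Type*} [Fintype α] [Fintype β] [Fintype γ]
  [DecidableEq α] [DecidableEq β] [DecidableEq γ]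

lemma actT_diag (d : α → F) (e : β → F) (f : γ → F) (T : α → β → γ → F) :
    actT (diagonal d) (diagonal e) (diagonal f) T
      = fun i a b => d i * e a * f b * T i a b := by
  funext i a b
  simp [actT, diagonal_apply, ite_mul, mul_ite, zero_mul, mul_zero, Finset.sum_ite_eq]

def pm {α : Type*} [DecidableEq α] (F : Type*) [Field F] (π : α ≃ α) : Matrix α α F :=
  Matrix.of fun a b => if π.symm a = b then 1 else 0

lemma pm_mul (π ρ : α ≃ α) : (pm F π * pm F ρ) = pm F (ρ.trans π) := by
  ext a b
  rw [Matrix.mul_apply, Finset.sum_eq_single (π.symm a)]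
  · simp [pm, Equiv.trans]; congr
  · intro c _ hc; simp [pm, Ne.symm hc]
  · simp

lemma pm_refl : pm F (Equiv.refl α) = (1 : Matrix α α F) := by
  ext a b; simp [pm, one_apply]; congr

lemma pm_isUnit (π : α ≃ α) : IsUnit (pm F π) := by
  refine ⟨⟨pm F π, pm F π.symm, ?_, ?_⟩, rfl⟩
  · rw [pm_mul, Equiv.symm_trans_self, pm_refl]
  · rw [pm_mul, Equiv.self_trans_symm, pm_refl]

lemma actT_pm (π : α ≃ α) (ρ : β ≃ β) (τ : γ ≃ γ) (T : α → β → γ → F) :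
    actT (pm F π) (pm F ρ) (pm F τ) T
      = fun i a b => T (π.symm i) (ρ.symm a) (τ.symm b) := by
  funext i a b
  simp [actT, pm, ite_mul, mul_ite, zero_mul, mul_zero, one_mul, Finset.sum_ite_eq]

lemma isUnit_diagonal (d : α → F) (hd : ∀ i, d i ≠ 0) : IsUnit (diagonal d) := by
  rw [Matrix.isUnit_iff_isUnit_det, det_diagonal]
  exact (Finset.prod_ne_zero_iff.2 fun i _ => hd i).isUnit
end

section
variable {F : Type*} [Field F] {k' n r : ℕ}

def blk : (Fin r ⊕ Fin k' × Fin n) → (Fin 1 ⊕ Fin k') :=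
  Sum.elim (fun _ => Sum.inl 0) (fun x => Sum.inr x.1)

lemma Tknr_supp (i : Fin 1 ⊕ Fin k') (a b : Fin r ⊕ Fin k' × Fin n)
    (h : Tknr F k' n r i a b ≠ 0) : a = b ∧ i = blk a := by
  rcases i with i | i <;> rcases a with a | ⟨ia, α⟩ <;> rcases b with b | ⟨ib, β⟩ <;>
    simp [Tknr, Tpart1, Tpart2, blk] at h ⊢
  · exact ⟨h, Subsingleton.elim _ _⟩
  · obtain ⟨h1, h2, h3⟩ := h; exact ⟨⟨h1.trans h2.symm, h3⟩, h1.symm⟩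

lemma Tpart2_inl (i : Fin 1) (a b : Fin r ⊕ Fin k' × Fin n) :
    Tpart2 F k' n r (Sum.inl i) a b = 0 := by
  rcases a with a | a <;> rcases b with b | b <;> rfl

lemma Tpart1_inr (i : Fin k') (a b : Fin r ⊕ Fin k' × Fin n) :
    Tpart1 F k' n r (Sum.inr i) a b = 0 := by
  rcases a with a | a <;> rcases b with b | b <;> rfl

lemma Tpart1_zero (h : r = 0) (i : Fin 1 ⊕ Fin k') (a b : Fin r ⊕ Fin k' × Fin n) :
    Tpart1 F k' n r i a b = 0 := by
  rcases a with a | a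
  · exact absurd a.isLt (by omega)
  · rcases i with i | i <;> rcases b with b | b <;> rfl

lemma Tpart2_zero (h : k' = 0) (i : Fin 1 ⊕ Fin k') (a b : Fin r ⊕ Fin k' × Fin n) :
    Tpart2 F k' n r i a b = 0 := by
  rcases i with i | i
  · exact Tpart2_inl i a b
  · exact absurd i.isLt (by omega)

lemma Tknr_perm (σr : Equiv.Perm (Fin r)) (σk : Equiv.Perm (Fin k')) (σn : Equiv.Perm (Fin n))
    (i : Fin 1 ⊕ Fin k') (a b : Fin r ⊕ Fin k' × Fin n) :
    Tknr F k' n r (((Equiv.refl (Fin 1)).sumCongr σk).symm i)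
      ((σr.sumCongr (σk.prodCongr σn)).symm a) ((σr.sumCongr (σk.prodCongr σn)).symm b)
      = Tknr F k' n r i a b := by
  rcases i with i | i <;> rcases a with a | ⟨ia, α⟩ <;> rcases b with b | ⟨ib, β⟩ <;>
    simp [Tknr, Tpart1, Tpart2, Equiv.sumCongr, Equiv.prodCongr]
end

section
variable {F : Type*} [Field F] {k' n r : ℕ}

lemma Tk_diag (d : Fin 1 ⊕ Fin k' → F) (e : Fin r ⊕ Fin k' × Fin n → F)
    (hd : ∀ i, d i ≠ 0) (he : ∀ a, e a ≠ 0) :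
    actT (diagonal d) (diagonal e) (diagonal fun a => (d (blk a) * e a)⁻¹)
      (Tknr F k' n r) = Tknr F k' n r := by
  rw [actT_diag]
  funext i a b
  by_cases h : Tknr F k' n r i a b = 0
  · simp [h]
  · obtain ⟨rfl, rfl⟩ := Tknr_supp _ _ _ h
    rw [mul_inv_cancel₀ (mul_ne_zero (hd _) (he _)), one_mul]

lemma Tk_perm_act (σr : Equiv.Perm (Fin r)) (σk : Equiv.Perm (Fin k')) (σn : Equiv.Perm (Fin n)) :
    actT (pm F ((Equiv.refl (Fin 1)).sumCongr σk)) (pm F (σr.sumCongr (σk.prodCongr σn)))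
      (pm F (σr.sumCongr (σk.prodCongr σn))) (Tknr F k' n r) = Tknr F k' n r := by
  rw [actT_pm]; funext i a b; exact Tknr_perm σr σk σn i a b

lemma cancel_c {c t : F} (hc1 : c ≠ 1) (h : c * t = t) : t = 0 := by
  have h2 : (c - 1) * t = 0 := by rw [sub_mul, one_mul, h, sub_self]
  rcases mul_eq_zero.1 h2 with h3 | h3
  · exact absurd (sub_eq_zero.1 h3) hc1
  · exact h3

lemma main_form [IsAlgClosed F] (hn : 0 < n)
    (T : (Fin 1 ⊕ Fin k') → (Fin r ⊕ Fin k' × Fin n) → (Fin r ⊕ Fin k' × Fin n) → F)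
    (H : ∀ (A : Matrix (Fin 1 ⊕ Fin k') (Fin 1 ⊕ Fin k') F)
        (B C : Matrix (Fin r ⊕ Fin k' × Fin n) (Fin r ⊕ Fin k' × Fin n) F),
        IsUnit A → IsUnit B → IsUnit C →
        actT A B C (Tknr F k' n r) = Tknr F k' n r → actT A B C T = T) :
    T = fun i a b =>
      (if h : 0 < r then T (Sum.inl 0) (Sum.inl ⟨0,h⟩) (Sum.inl ⟨0,h⟩) else 1)
          * Tpart1 F k' n r i a b
        + (if h : 0 < k' then
            T (Sum.inr ⟨0,h⟩) (Sum.inr (⟨0,h⟩,⟨0,hn⟩)) (Sum.inr (⟨0,h⟩,⟨0,hn⟩)) else 1)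
          * Tpart2 F k' n r i a b := by
  classical
  obtain ⟨c, hc⟩ := Infinite.exists_notMem_finset ({0, 1} : Finset F)
  simp only [Finset.mem_insert, Finset.mem_singleton, not_or] at hc
  obtain ⟨hc0, hc1⟩ := hc
  have Hdiag : ∀ (d : Fin 1 ⊕ Fin k' → F) (e : Fin r ⊕ Fin k' × Fin n → F),
      (∀ i, d i ≠ 0) → (∀ a, e a ≠ 0) → ∀ i a b,
      d i * e a * (d (blk b) * e b)⁻¹ * T i a b = T i a b := by
    intro d e hd he i a b
    have h := H _ _ _ (isUnit_diagonal d hd) (isUnit_diagonal e he)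
      (isUnit_diagonal _ (fun a => inv_ne_zero (mul_ne_zero (hd _) (he _))))
      (Tk_diag d e hd he)
    rw [actT_diag] at h
    exact congrFun (congrFun (congrFun h i) a) b
  have Hperm : ∀ (σr : Equiv.Perm (Fin r)) (σk : Equiv.Perm (Fin k'))
      (σn : Equiv.Perm (Fin n)) i a b,
      T (((Equiv.refl (Fin 1)).sumCongr σk).symm i)
        ((σr.sumCongr (σk.prodCongr σn)).symm a)
        ((σr.sumCongr (σk.prodCongr σn)).symm b) = T i a b := by
    intro σr σk σn i a b
    have h := H _ _ _ (pm_isUnit _) (pm_isUnit _) (pm_isUnit _) (Tk_perm_act σr σk σn)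
    rw [actT_pm] at h
    exact congrFun (congrFun (congrFun h i) a) b
  have F1 : ∀ i a b, a ≠ b → T i a b = 0 := by
    intro i a b hab
    have h := Hdiag (fun _ => 1) (fun x => if x = a then c else 1) (fun _ => one_ne_zero)
      (fun x => by split_ifs; exacts [hc0, one_ne_zero]) i a b
    rw [if_pos rfl, if_neg (Ne.symm hab)] at h
    have h' : c * T i a b = T i a b := by simpa using h
    exact cancel_c hc1 h'
  have F2 : ∀ i a, i ≠ blk a → T i a a = 0 := by
    intro i a hia
    have h := Hdiag (fun u => if u = i then c else 1) (fun _ => 1)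
      (fun u => by split_ifs; exacts [hc0, one_ne_zero]) (fun _ => one_ne_zero) i a a
    rw [if_pos rfl, if_neg (fun h' => hia (h'.symm))] at h
    have h' : c * T i a a = T i a a := by simpa using h
    exact cancel_c hc1 h'
  have F3 : ∀ (z j : Fin r), T (Sum.inl 0) (Sum.inl j) (Sum.inl j)
      = T (Sum.inl 0) (Sum.inl z) (Sum.inl z) := by
    intro z j
    have h := Hperm (Equiv.swap j z) (Equiv.refl _) (Equiv.refl _)
      (Sum.inl 0) (Sum.inl j) (Sum.inl j)
    simpa using h.symm
  have F4 : ∀ (z : Fin k') (ζ : Fin n) (i : Fin k') (α : Fin n),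
      T (Sum.inr i) (Sum.inr (i,α)) (Sum.inr (i,α))
        = T (Sum.inr z) (Sum.inr (z,ζ)) (Sum.inr (z,ζ)) := by
    intro z ζ i α
    have h := Hperm (Equiv.refl _) (Equiv.swap i z) (Equiv.swap α ζ)
      (Sum.inr i) (Sum.inr (i,α)) (Sum.inr (i,α))
    simpa using h.symm
  funext i a b
  rcases i with i | i <;> rcases a with a | ⟨ia,α⟩ <;> rcases b with b | ⟨ib,β⟩
  · -- inl inl inl
    obtain rfl : i = 0 := Subsingleton.elim _ _
    rcases eq_or_ne a b with rfl | hab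
    · rw [dif_pos a.pos]
      have h3 := F3 ⟨0, a.pos⟩ a
      simp [Tpart1, Tpart2, h3]
    · rw [F1 _ _ _ (fun h => hab (Sum.inl.inj h))]
      simp [Tpart1, Tpart2, hab]
  · rw [F1 _ _ _ (by simp)]; simp [Tpart1, Tpart2]
  · rw [F1 _ _ _ (by simp)]; simp [Tpart1, Tpart2]
  · -- inl inr inr
    rcases eq_or_ne (Sum.inr (ia,α) : Fin r ⊕ Fin k' × Fin n) (Sum.inr (ib,β)) with h | h
    · rw [← h, F2 _ _ (by simp [blk])]; simp [Tpart1, Tpart2]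
    · rw [F1 _ _ _ h]; simp [Tpart1, Tpart2]
  · rcases eq_or_ne a b with rfl | hab
    · rw [F2 _ _ (by simp [blk])]; simp [Tpart1, Tpart2]
    · rw [F1 _ _ _ (fun h => hab (Sum.inl.inj h))]; simp [Tpart1, Tpart2]
  · rw [F1 _ _ _ (by simp)]; simp [Tpart1, Tpart2]
  · rw [F1 _ _ _ (by simp)]; simp [Tpart1, Tpart2]
  · -- inr inr inr
    rcases eq_or_ne (Sum.inr (ia,α) : Fin r ⊕ Fin k' × Fin n) (Sum.inr (ib,β)) with h | h
    · rw [← h]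
      rcases eq_or_ne ia i with rfl | hne
      · rw [dif_pos ia.pos]
        have h4 := F4 ⟨0, ia.pos⟩ ⟨0, hn⟩ ia α
        simp [Tpart1, Tpart2, h4]
      · rw [F2 _ _ (by simp [blk, Ne.symm hne])]
        simp [Tpart1, Tpart2, fun h : ia = i => hne h]
    · have hne : ¬(ia = i ∧ ib = i ∧ α = β) := by
        rintro ⟨rfl, rfl, rfl⟩; exact h rfl
      rw [F1 _ _ _ h]; simp [Tpart1, Tpart2, hne]
end

section
variable {F : Type*} [Field F] {k' n r : ℕ}

lemma Tpart2_arg2_inl (i : Fin 1 ⊕ Fin k') (a : Fin r) (b : Fin r ⊕ Fin k' × Fin n) :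
    Tpart2 F k' n r i (Sum.inl a) b = 0 := by
  rcases i with i | i <;> rcases b with b | ⟨p, q⟩ <;> rfl

lemma Tpart1_arg2_inr (i : Fin 1 ⊕ Fin k') (a : Fin k' × Fin n) (b : Fin r ⊕ Fin k' × Fin n) :
    Tpart1 F k' n r i (Sum.inr a) b = 0 := by
  rcases i with i | i <;> rcases b with b | ⟨p, q⟩ <;> rfl

lemma diagonal_const_one {ι : Type*} [Fintype ι] [DecidableEq ι] :
    (diagonal (fun _ : ι => (1 : F))) = 1 := by
  rw [show (fun _ : ι => (1 : F)) = 1 from rfl]; exact diagonal_one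

lemma scale_eq (x y : F) :
    actT (diagonal (Sum.elim (fun _ : Fin 1 => x) (fun _ : Fin k' => y))) 1 1 (Tknr F k' n r)
      = fun i a b => x * Tpart1 F k' n r i a b + y * Tpart2 F k' n r i a b := by
  rw [← diagonal_const_one (F := F) (ι := Fin r ⊕ Fin k' × Fin n), actT_diag]
  funext i a b
  rcases i with i | i
  · simp [Tknr, Tpart2_inl, mul_add]
  · simp [Tknr, Tpart1_inr, mul_add]

lemma eval_comp {Q : Type*} (g : Q → Polynomial F) (x : F) (p : MvPolynomial Q F) :
    Polynomial.eval x (MvPolynomial.aeval g p)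
      = MvPolynomial.eval (fun q => Polynomial.eval x (g q)) p := by
  induction p using MvPolynomial.induction_on with
  | C a => simp
  | add p q hp hq => simp [hp, hq]
  | mul_X p i hp => simp [hp]

lemma poly_zero [Infinite F] (q : Polynomial F) (h : ∀ x : F, x ≠ 0 → q.eval x = 0) (x : F) :
    q.eval x = 0 := by
  have hq : q = 0 := by
    apply Polynomial.eq_zero_of_infinite_isRoot
    exact ((Set.finite_singleton (0 : F)).infinite_compl).mono (fun y hy => h y hy)
  simp [hq]
end

/-- If `T ∈ F^k ⊗ L ⊗ L` has the same stabilizer in `GL_k × GL_s × GL_s` as `T_{k,n,r}`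
(`r < n`), then `T = a₁ ∑_j e₁ ⊗ e_{1j} ⊗ e_{1j} + a₂ ∑_{i≥2} ∑_j e_i ⊗ e_{ij} ⊗ e_{ij}`
with `a₁, a₂ ≠ 0`, and hence `T` lies in the orbit of `T_{k,n,r}`.  If the stabilizer of
`T` merely contains that of `T_{k,n,r}`, then `T` has this form with `a₁, a₂` possibly
zero, and `T` lies in the Zariski closure of the orbit of `T_{k,n,r}`. -/
theorem stmt8 {F : Type*} [Field F] [IsAlgClosed F] (k' n r : ℕ) (hr : r < n)
    (T : (Fin 1 ⊕ Fin k') → (Fin r ⊕ Fin k' × Fin n) → (Fin r ⊕ Fin k' × Fin n) → F) :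
    ((∀ (A : Matrix (Fin 1 ⊕ Fin k') (Fin 1 ⊕ Fin k') F)
        (B C : Matrix (Fin r ⊕ Fin k' × Fin n) (Fin r ⊕ Fin k' × Fin n) F),
        IsUnit A → IsUnit B → IsUnit C →
        (actT A B C T = T ↔ actT A B C (Tknr F k' n r) = Tknr F k' n r)) →
      ∃ a₁ a₂ : F, a₁ ≠ 0 ∧ a₂ ≠ 0 ∧
        T = (fun i a b => a₁ * Tpart1 F k' n r i a b + a₂ * Tpart2 F k' n r i a b) ∧
        ∃ A B C, IsUnit A ∧ IsUnit B ∧ IsUnit C ∧ T = actT A B C (Tknr F k' n r)) ∧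
    ((∀ (A : Matrix (Fin 1 ⊕ Fin k') (Fin 1 ⊕ Fin k') F)
        (B C : Matrix (Fin r ⊕ Fin k' × Fin n) (Fin r ⊕ Fin k' × Fin n) F),
        IsUnit A → IsUnit B → IsUnit C →
        actT A B C (Tknr F k' n r) = Tknr F k' n r → actT A B C T = T) →
      ∃ a₁ a₂ : F,
        T = (fun i a b => a₁ * Tpart1 F k' n r i a b + a₂ * Tpart2 F k' n r i a b) ∧
        ∀ p : MvPolynomial ((Fin 1 ⊕ Fin k') × (Fin r ⊕ Fin k' × Fin n) ×
            (Fin r ⊕ Fin k' × Fin n)) F,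
          (∀ S, (∃ A B C, IsUnit A ∧ IsUnit B ∧ IsUnit C ∧
              S = actT A B C (Tknr F k' n r)) →
            MvPolynomial.eval (fun q => S q.1 q.2.1 q.2.2) p = 0) →
          MvPolynomial.eval (fun q => T q.1 q.2.1 q.2.2) p = 0) := by
  have hn : 0 < n := lt_of_le_of_lt (Nat.zero_le r) hr
  classical
  constructor
  · intro Hiff
    have H : ∀ (A : Matrix (Fin 1 ⊕ Fin k') (Fin 1 ⊕ Fin k') F)
        (B C : Matrix (Fin r ⊕ Fin k' × Fin n) (Fin r ⊕ Fin k' × Fin n) F),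
        IsUnit A → IsUnit B → IsUnit C →
        actT A B C (Tknr F k' n r) = Tknr F k' n r → actT A B C T = T :=
      fun A B C hA hB hC h => (Hiff A B C hA hB hC).2 h
    obtain ⟨a1, a2, hT⟩ : ∃ a1 a2, T = fun i a b =>
        a1 * Tpart1 F k' n r i a b + a2 * Tpart2 F k' n r i a b :=
      ⟨_, _, main_form hn T H⟩
    obtain ⟨c, hc⟩ := Infinite.exists_notMem_finset ({0, 1} : Finset F)
    simp only [Finset.mem_insert, Finset.mem_singleton, not_or] at hc
    obtain ⟨hc0, hc1⟩ := hc
    have key1 : 0 < r → a1 ≠ 0 := by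
      intro hr0 ha
      set e : (Fin r ⊕ Fin k' × Fin n) → F := Sum.elim (fun _ => c) (fun _ => 1) with he
      have hTe : actT 1 (diagonal e) 1 T = T := by
        have h0 : actT (diagonal (fun _ => (1:F))) (diagonal e)
            (diagonal (fun _ => (1:F))) T = T := by
          rw [actT_diag]; funext i a b
          rcases a with a | a
          · have hz : T i (Sum.inl a) b = 0 := by
              rw [hT]; simp [ha, Tpart2_arg2_inl]
            rw [hz]; simp
          · simp [he]
        simpa only [diagonal_const_one] using h0
      have hTk := (Hiff 1 (diagonal e) 1 isUnit_one
        (isUnit_diagonal e (by rintro (u | u) <;> simp [he, hc0])) isUnit_one).1 hTe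
      have h1 : actT (diagonal (fun _ => (1:F))) (diagonal e) (diagonal (fun _ => (1:F)))
          (Tknr F k' n r) = Tknr F k' n r := by
        simpa only [diagonal_const_one] using hTk
      rw [actT_diag] at h1
      have h2 := congrFun (congrFun (congrFun h1 (Sum.inl 0)) (Sum.inl ⟨0, hr0⟩))
        (Sum.inl ⟨0, hr0⟩)
      have hTkv : Tknr F k' n r (Sum.inl 0) (Sum.inl ⟨0, hr0⟩) (Sum.inl ⟨0, hr0⟩) = 1 := by
        simp [Tknr, Tpart1, Tpart2]
      rw [hTkv] at h2
      simp [he] at h2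
      exact hc1 h2
    have key2 : 0 < k' → a2 ≠ 0 := by
      intro hk0 ha
      set e : (Fin r ⊕ Fin k' × Fin n) → F := Sum.elim (fun _ => 1) (fun _ => c) with he
      have hTe : actT 1 (diagonal e) 1 T = T := by
        have h0 : actT (diagonal (fun _ => (1:F))) (diagonal e)
            (diagonal (fun _ => (1:F))) T = T := by
          rw [actT_diag]; funext i a b
          rcases a with a | a
          · simp [he]
          · have hz : T i (Sum.inr a) b = 0 := by
              rw [hT]; simp [ha, Tpart1_arg2_inr]
            rw [hz]; simp
        simpa only [diagonal_const_one] using h0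
      have hTk := (Hiff 1 (diagonal e) 1 isUnit_one
        (isUnit_diagonal e (by rintro (u | u) <;> simp [he, hc0])) isUnit_one).1 hTe
      have h1 : actT (diagonal (fun _ => (1:F))) (diagonal e) (diagonal (fun _ => (1:F)))
          (Tknr F k' n r) = Tknr F k' n r := by
        simpa only [diagonal_const_one] using hTk
      rw [actT_diag] at h1
      have h2 := congrFun (congrFun (congrFun h1 (Sum.inr ⟨0, hk0⟩))
        (Sum.inr (⟨0, hk0⟩, ⟨0, hn⟩))) (Sum.inr (⟨0, hk0⟩, ⟨0, hn⟩))
      have hTkv : Tknr F k' n r (Sum.inr ⟨0, hk0⟩) (Sum.inr (⟨0, hk0⟩, ⟨0, hn⟩))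
          (Sum.inr (⟨0, hk0⟩, ⟨0, hn⟩)) = 1 := by
        simp [Tknr, Tpart1, Tpart2]
      rw [hTkv] at h2
      simp [he] at h2
      exact hc1 h2
    have hT' : T = fun i a b => (if 0 < r then a1 else 1) * Tpart1 F k' n r i a b
        + (if 0 < k' then a2 else 1) * Tpart2 F k' n r i a b := by
      rw [hT]; funext i a b
      by_cases h0 : 0 < r <;> by_cases h1 : 0 < k'
      · rw [if_pos h0, if_pos h1]
      · rw [if_pos h0, if_neg h1, Tpart2_zero (by omega)]; ring
      · rw [if_neg h0, if_pos h1, Tpart1_zero (by omega)]; ring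
      · rw [if_neg h0, if_neg h1, Tpart1_zero (by omega), Tpart2_zero (by omega)]; ring
    have nz1 : (if 0 < r then a1 else 1) ≠ 0 := by
      split_ifs with h; exacts [key1 h, one_ne_zero]
    have nz2 : (if 0 < k' then a2 else 1) ≠ 0 := by
      split_ifs with h; exacts [key2 h, one_ne_zero]
    refine ⟨_, _, nz1, nz2, hT', diagonal (Sum.elim (fun _ : Fin 1 => if 0 < r then a1 else 1)
      (fun _ : Fin k' => if 0 < k' then a2 else 1)), 1, 1,
      isUnit_diagonal _ ?_, isUnit_one, isUnit_one, hT'.trans (scale_eq _ _).symm⟩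
    rintro (u | u)
    · simpa using nz1
    · simpa using nz2
  · intro H
    obtain ⟨a1, a2, hT⟩ : ∃ a1 a2, T = fun i a b =>
        a1 * Tpart1 F k' n r i a b + a2 * Tpart2 F k' n r i a b :=
      ⟨_, _, main_form hn T H⟩
    refine ⟨a1, a2, hT, ?_⟩
    intro p hp
    have horb : ∀ x y : F, x ≠ 0 → y ≠ 0 →
        MvPolynomial.eval (fun q => x * Tpart1 F k' n r q.1 q.2.1 q.2.2
          + y * Tpart2 F k' n r q.1 q.2.1 q.2.2) p = 0 := by
      intro x y hx hy
      have := hp (fun i a b => x * Tpart1 F k' n r i a b + y * Tpart2 F k' n r i a b)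
        ⟨diagonal (Sum.elim (fun _ : Fin 1 => x) (fun _ : Fin k' => y)), 1, 1,
          isUnit_diagonal _ (by rintro (u | u) <;> [simpa using hx; simpa using hy]),
          isUnit_one, isUnit_one, (scale_eq x y).symm⟩
      exact this
    have h1 : ∀ y : F, y ≠ 0 →
        MvPolynomial.eval (fun q => a1 * Tpart1 F k' n r q.1 q.2.1 q.2.2
          + y * Tpart2 F k' n r q.1 q.2.1 q.2.2) p = 0 := by
      intro y hy
      set g : ((Fin 1 ⊕ Fin k') × (Fin r ⊕ Fin k' × Fin n) × (Fin r ⊕ Fin k' × Fin n)) → Polynomial F := fun q => Polynomial.X *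
          Polynomial.C (Tpart1 F k' n r q.1 q.2.1 q.2.2)
          + Polynomial.C (y * Tpart2 F k' n r q.1 q.2.1 q.2.2) with hg
      have hfun : ∀ x : F, (fun q => Polynomial.eval x (g q))
          = (fun q => x * Tpart1 F k' n r q.1 q.2.1 q.2.2
            + y * Tpart2 F k' n r q.1 q.2.1 q.2.2) := by
        intro x; funext q
        simp only [hg, Polynomial.eval_add, Polynomial.eval_mul, Polynomial.eval_X,
          Polynomial.eval_C]
      have hpoly := poly_zero (MvPolynomial.aeval g p)
        (fun x hx => by rw [eval_comp, hfun x]; exact horb x y hx hy) a1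
      rw [eval_comp, hfun a1] at hpoly
      exact hpoly
    have h2 : MvPolynomial.eval (fun q => a1 * Tpart1 F k' n r q.1 q.2.1 q.2.2
        + a2 * Tpart2 F k' n r q.1 q.2.1 q.2.2) p = 0 := by
      set g : ((Fin 1 ⊕ Fin k') × (Fin r ⊕ Fin k' × Fin n) × (Fin r ⊕ Fin k' × Fin n)) → Polynomial F := fun q =>
          Polynomial.C (a1 * Tpart1 F k' n r q.1 q.2.1 q.2.2)
          + Polynomial.X * Polynomial.C (Tpart2 F k' n r q.1 q.2.1 q.2.2) with hg
      have hfun : ∀ y : F, (fun q => Polynomial.eval y (g q))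
          = (fun q => a1 * Tpart1 F k' n r q.1 q.2.1 q.2.2
            + y * Tpart2 F k' n r q.1 q.2.1 q.2.2) := by
        intro y; funext q
        simp only [hg, Polynomial.eval_add, Polynomial.eval_mul, Polynomial.eval_X,
          Polynomial.eval_C]
      have hpoly := poly_zero (MvPolynomial.aeval g p)
        (fun y hy => by rw [eval_comp, hfun y]; exact h1 y hy) a2
      rw [eval_comp, hfun a2] at hpoly
      exact hpoly
    rw [hT]
    exact h2
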